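/- Let f ∈ ℂ[x,y]_d be a nonzero binary form of degree d ≥ 1 and let f_x = ∂f/∂x. If FR(f) > FR(f_x), then WR(f) = FR(f_x) + 1. -/

import Mathlib

open MvPolynomial

/-- The linear form `x + β y` in `ℂ[x,y]`. -/
noncomputable def linForm (β : ℂ) : MvPolynomial (Fin 2) ℂ := X 0 + C β * X 1

/-- The Waring rank of a binary form `f ∈ ℂ[x,y]_d`: the least `r` such that
`f = Σ_{k=1}^{r} λ_k L_k^d` with all `λ_k ∈ ℂ∖{0}` and `L_k` linear forms. -/
noncomputable def waringRank (d : ℕ) (f : MvPolynomial (Fin 2) ℂ) : ℕ :=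
  sInf {r : ℕ | ∃ (lam : Fin r → ℂ) (L : Fin r → MvPolynomial (Fin 2) ℂ),
    (∀ k, lam k ≠ 0) ∧ (∀ k, (L k).IsHomogeneous 1) ∧ f = ∑ k, C (lam k) * (L k) ^ d}

/-- The F-rank of a binary form `f ∈ ℂ[x,y]_d`: the least `r ≥ 0` such that
`f = Σ_{k=1}^{r} λ_k (x+β_k y)^d` for some `λ_k, β_k ∈ ℂ`. -/
noncomputable def fRank (d : ℕ) (f : MvPolynomial (Fin 2) ℂ) : ℕ :=
  sInf {r : ℕ | ∃ lam β : Fin r → ℂ, f = ∑ k, C (lam k) * (linForm (β k)) ^ d}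

lemma linForm_homog (β : ℂ) : (linForm β).IsHomogeneous 1 := by
  unfold linForm
  exact (isHomogeneous_X _ _).add ((isHomogeneous_C _ _).mul (isHomogeneous_X _ _))

lemma pderiv_linForm (β : ℂ) : pderiv (0 : Fin 2) (linForm β) = 1 := by
  unfold linForm
  simp [pderiv_X]

lemma fin2_deg1 (m : Fin 2 →₀ ℕ) (h : m 0 + m 1 = 1) :
    m = Finsupp.single 0 1 ∨ m = Finsupp.single 1 1 := by
  rcases Nat.add_eq_one_iff.mp h with ⟨h0, h1⟩ | ⟨h0, h1⟩
  · right; ext i; fin_cases i <;> simp [h0, h1, Finsupp.single_apply]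
  · left; ext i; fin_cases i <;> simp [h0, h1, Finsupp.single_apply]

lemma hom1_decomp (L : MvPolynomial (Fin 2) ℂ) (h : L.IsHomogeneous 1) :
    ∃ a b : ℂ, L = C a * X 0 + C b * X 1 := by
  refine ⟨coeff (Finsupp.single 0 1) L, coeff (Finsupp.single 1 1) L, ?_⟩
  have hne : (Finsupp.single (0:Fin 2) 1) ≠ Finsupp.single 1 1 := by
    intro hh
    have := DFunLike.congr_fun hh (0:Fin 2)
    simp [Finsupp.single_apply] at this
  ext m
  rw [coeff_add, coeff_C_mul, coeff_C_mul, coeff_X', coeff_X']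
  by_cases h0 : m = Finsupp.single 0 1
  · subst h0; simp [hne.symm]
  by_cases h1 : m = Finsupp.single 1 1
  · subst h1; simp [hne, Ne.symm h0]
  · have hz : coeff m L = 0 := by
      by_contra hc
      have hdeg := h hc
      have hsum : m 0 + m 1 = 1 := by
        simpa [Finsupp.weight_apply, Finsupp.sum_fintype, Fin.sum_univ_two, mul_one]
          using hdeg
      rcases fin2_deg1 m hsum with h' | h' <;> [exact h0 h'; exact h1 h']
    simp [hz, Ne.symm h0, Ne.symm h1]

lemma coeff_pderiv (i : Fin 2) (m : Fin 2 →₀ ℕ) (p : MvPolynomial (Fin 2) ℂ) :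
    coeff m (pderiv i p) = (m i + 1) * coeff (m + Finsupp.single i 1) p := by
  induction p using MvPolynomial.induction_on' with
  | monomial s a =>
    rw [pderiv_monomial, coeff_monomial, coeff_monomial]
    by_cases hs : s = m + Finsupp.single i 1
    · subst hs
      have h1 : (m + Finsupp.single i 1) - Finsupp.single i 1 = m := by
        ext j
        by_cases hj : j = i
        · subst hj; simp
        · simp [Finsupp.single_apply, Ne.symm hj]
      have h2 : (m + Finsupp.single i 1 : Fin 2 →₀ ℕ) i = m i + 1 := by simp
      rw [if_pos h1, h2]; simp; ring
    · rw [if_neg hs, mul_zero]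
      by_cases h1 : s - Finsupp.single i 1 = m
      · rw [if_pos h1]
        by_cases h2 : s i = 0
        · simp [h2]
        · exfalso
          apply hs
          rw [← h1]
          ext j
          by_cases hj : j = i
          · subst hj; simp [Nat.sub_add_cancel (Nat.one_le_iff_ne_zero.mpr h2)]
          · simp [Finsupp.single_apply, Ne.symm hj]
      · rw [if_neg h1]
  | add p q hp hq => simp [hp, hq, mul_add]

lemma eq_c_x1_pow (d : ℕ) (p : MvPolynomial (Fin 2) ℂ) (hp : p.IsHomogeneous d)
    (h0 : pderiv (0 : Fin 2) p = 0) :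
    ∃ c : ℂ, p = C c * X 1 ^ d := by
  refine ⟨coeff (Finsupp.single 1 d) p, ?_⟩
  ext m
  rw [coeff_C_mul, coeff_X_pow]
  by_cases hm : m = Finsupp.single 1 d
  · subst hm; simp
  · rw [if_neg (fun hh => hm hh.symm), mul_zero]
    by_cases hm0 : m 0 = 0
    · by_contra hc
      have hdeg := hp hc
      have hsum : m 0 + m 1 = d := by
        simpa [Finsupp.weight_apply, Finsupp.sum_fintype, Fin.sum_univ_two, mul_one]
          using hdeg
      apply hm
      ext j
      fin_cases j <;> simp [Finsupp.single_apply, hm0] at hsum ⊢ <;> omega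
    · obtain ⟨k, hk⟩ := Nat.exists_eq_succ_of_ne_zero hm0
      set m' : Fin 2 →₀ ℕ := m - Finsupp.single 0 1 with hm'
      have hme : m' + Finsupp.single 0 1 = m := by
        ext j
        by_cases hj : j = 0
        · subst hj; simp [hm', hk]
        · simp [hm', Finsupp.single_apply, Ne.symm hj]
      have := coeff_pderiv 0 m' p
      rw [h0, hme] at this
      simp only [coeff_zero] at this
      have hne : ((m' 0 : ℕ) : ℂ) + 1 ≠ 0 := Nat.cast_add_one_ne_zero (m' 0)
      exact ((mul_eq_zero.mp this.symm).resolve_left hne)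

lemma pderiv_term (μ β : ℂ) (d : ℕ) :
    pderiv (0 : Fin 2) (C μ * linForm β ^ d) = C (μ * d) * linForm β ^ (d - 1) := by
  rw [pderiv_C_mul, pderiv_pow, pderiv_linForm, mul_one,
    show ((d : ℕ) : MvPolynomial (Fin 2) ℂ) = C (d : ℂ) from (map_natCast C d).symm, map_mul]
  ring

lemma filter_rep (d : ℕ) : ∀ (n : ℕ) (c : Fin n → ℂ) (L : Fin n → MvPolynomial (Fin 2) ℂ),
    (∀ k, (L k).IsHomogeneous 1) →
    ∃ m, m ≤ n ∧ ∃ (lam : Fin m → ℂ) (L' : Fin m → MvPolynomial (Fin 2) ℂ),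
      (∀ k, lam k ≠ 0) ∧ (∀ k, (L' k).IsHomogeneous 1) ∧
      (∑ k, C (c k) * L k ^ d) = ∑ k, C (lam k) * L' k ^ d := by
  intro n
  induction n with
  | zero =>
    intro c L _
    exact ⟨0, le_refl _, Fin.elim0, Fin.elim0, fun k => k.elim0, fun k => k.elim0, by simp⟩
  | succ n ih =>
    intro c L hL
    obtain ⟨m, hm, lam, L', hlam, hL', hsum⟩ :=
      ih (c ∘ Fin.castSucc) (L ∘ Fin.castSucc) (fun k => hL _)
    by_cases hc : c (Fin.last n) = 0
    · refine ⟨m, hm.trans (Nat.le_succ n), lam, L', hlam, hL', ?_⟩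
      rw [Fin.sum_univ_castSucc, hc]
      simpa using hsum
    · refine ⟨m + 1, Nat.succ_le_succ hm, Fin.snoc lam (c (Fin.last n)),
        Fin.snoc L' (L (Fin.last n)), ?_, ?_, ?_⟩
      · intro k
        refine Fin.lastCases ?_ ?_ k
        · simpa using hc
        · intro i; simpa using hlam i
      · intro k
        refine Fin.lastCases ?_ ?_ k
        · simpa using hL (Fin.last n)
        · intro i; simpa using hL' i
      · rw [Fin.sum_univ_castSucc, Fin.sum_univ_castSucc]
        simp only [Fin.snoc_castSucc, Fin.snoc_last]
        rw [← hsum]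
        rfl

/-- For a nonzero binary form `f ∈ ℂ[x,y]_d`, `d ≥ 1`, with `f_x = ∂f/∂x`:
if `FR(f) > FR(f_x)` then `WR(f) = FR(f_x) + 1`. -/
theorem waringRank_eq_fRank_deriv_add_one (d : ℕ) (hd : 1 ≤ d) (f : MvPolynomial (Fin 2) ℂ)
    (hf : f.IsHomogeneous d) (hf0 : f ≠ 0)
    (h : fRank (d - 1) (pderiv (0 : Fin 2) f) < fRank d f) :
    waringRank d f = fRank (d - 1) (pderiv (0 : Fin 2) f) + 1 := by
  set fx := pderiv (0 : Fin 2) f with hfx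
  set r := fRank (d - 1) fx with hr
  have hdC : (d : ℂ) ≠ 0 := Nat.cast_ne_zero.mpr (by omega)
  have hd1 : d - 1 + 1 = d := Nat.succ_pred_eq_of_pos hd
  -- the fRank set of f is nonempty
  have hSf : {R : ℕ | ∃ lam β : Fin R → ℂ, f = ∑ k, C (lam k) * (linForm (β k)) ^ d}.Nonempty := by
    by_contra hne
    rw [Set.not_nonempty_iff_eq_empty] at hne
    have : fRank d f = 0 := by rw [fRank, hne, Nat.sInf_empty]
    omega
  -- hence the fRank set of fx is nonempty
  have hSfx : {R : ℕ | ∃ lam β : Fin R → ℂ,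
      fx = ∑ k, C (lam k) * (linForm (β k)) ^ (d - 1)}.Nonempty := by
    obtain ⟨R, lam, β, hRf⟩ := hSf
    refine ⟨R, fun k => lam k * d, β, ?_⟩
    rw [hfx, hRf, map_sum]
    exact Finset.sum_congr rfl (fun k _ => pderiv_term _ _ _)
  -- the fRank of fx is attained
  obtain ⟨lam, β, hfxrep⟩ : ∃ lam β : Fin r → ℂ,
      fx = ∑ k, C (lam k) * (linForm (β k)) ^ (d - 1) := Nat.sInf_mem hSfx
  -- integrate: g has x-derivative fx
  set g : MvPolynomial (Fin 2) ℂ := ∑ k, C (lam k / d) * (linForm (β k)) ^ d with hg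
  have hgderiv : pderiv (0 : Fin 2) g = fx := by
    rw [hg, map_sum, hfxrep]
    refine Finset.sum_congr rfl (fun k _ => ?_)
    rw [pderiv_term]
    congr 1
    rw [div_mul_cancel₀ _ hdC]
  have hghom : g.IsHomogeneous d := by
    rw [hg]
    refine IsHomogeneous.sum _ _ _ (fun k _ => ?_)
    have := (isHomogeneous_C (Fin 2) (lam k / d)).mul ((linForm_homog (β k)).pow d)
    simpa using this
  obtain ⟨c, hc⟩ : ∃ c : ℂ, f - g = C c * X 1 ^ d := by
    refine eq_c_x1_pow d _ (hf.sub hghom) ?_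
    rw [map_sub, hgderiv, hfx, sub_self]
  have hcne : c ≠ 0 := by
    intro hc0
    rw [hc0, map_zero, zero_mul, sub_eq_zero] at hc
    have : fRank d f ≤ r := Nat.sInf_le ⟨fun k => lam k / d, β, hc.trans hg⟩
    omega
  -- f = Σ_{k : Fin (r+1)} C c_k * L_k ^ d
  have hfrep : f = ∑ k : Fin (r + 1),
      C ((Fin.snoc (fun k => lam k / d) c : Fin (r + 1) → ℂ) k) *
        ((Fin.snoc (fun k => linForm (β k)) (X 1) : Fin (r + 1) → MvPolynomial (Fin 2) ℂ) k) ^ d := by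
    rw [Fin.sum_univ_castSucc]
    simp only [Fin.snoc_castSucc, Fin.snoc_last]
    rw [← hg, ← hc]
    ring
  -- upper bound
  have hWle : waringRank d f ≤ r + 1 := by
    obtain ⟨m, hm, lam', L', hlam', hL', hsum⟩ := filter_rep d (r + 1)
      (Fin.snoc (fun k => lam k / d) c)
      (Fin.snoc (fun k => linForm (β k)) (X 1))
      (by
        intro k
        refine Fin.lastCases ?_ ?_ k
        · simpa using isHomogeneous_X ℂ (1 : Fin 2)
        · intro i; simpa using linForm_homog (β i))
    have hmem : m ∈ {R : ℕ | ∃ (lam : Fin R → ℂ) (L : Fin R → MvPolynomial (Fin 2) ℂ),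
        (∀ k, lam k ≠ 0) ∧ (∀ k, (L k).IsHomogeneous 1) ∧
        f = ∑ k, C (lam k) * (L k) ^ d} :=
      ⟨lam', L', hlam', hL', hfrep.trans hsum⟩
    exact (Nat.sInf_le hmem).trans hm
  -- lower bound
  have hWge : r + 1 ≤ waringRank d f := by
    refine le_csInf ?_ ?_
    · obtain ⟨m, _, lam', L', hlam', hL', hsum⟩ := filter_rep d (r + 1)
        (Fin.snoc (fun k => lam k / d) c)
        (Fin.snoc (fun k => linForm (β k)) (X 1))
        (by
          intro k
          refine Fin.lastCases ?_ ?_ k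
          · simpa using isHomogeneous_X ℂ (1 : Fin 2)
          · intro i; simpa using linForm_homog (β i))
      exact ⟨m, lam', L', hlam', hL', hfrep.trans hsum⟩
    · rintro s ⟨mu, L, hmu, hLhom, hrep⟩
      by_contra hs
      push_neg at hs
      have hsr : s ≤ r := by omega
      choose a b hab using fun k => hom1_decomp (L k) (hLhom k)
      by_cases ha : ∃ j, a j = 0
      · -- some a j = 0 : fRank fx ≤ s - 1 < s ≤ r, contradiction
        obtain ⟨j, hj⟩ := ha
        set bb : Fin s → ℂ := fun k => if a k = 0 then 0 else b k / a k with hbb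
        have hfxrep2 : fx = ∑ k, C (mu k * d * a k ^ d) * (linForm (bb k)) ^ (d - 1) := by
          rw [hfx, hrep, map_sum]
          refine Finset.sum_congr rfl (fun k _ => ?_)
          rw [pderiv_C_mul, pderiv_pow, hab k]
          have hpd : pderiv (0 : Fin 2) (C (a k) * X 0 + C (b k) * X 1) = C (a k) := by
            simp [pderiv_X]
          rw [hpd]
          by_cases hak : a k = 0
          · simp [hak, zero_pow (by omega : d ≠ 0)]
          · have hLk : C (a k) * X 0 + C (b k) * X 1 = C (a k) * linForm (b k / a k) := by
              unfold linForm
              rw [mul_add, ← mul_assoc, ← map_mul, mul_div_cancel₀ _ hak]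
            rw [hLk, mul_pow, ← map_pow]
            rw [hbb]
            simp only [if_neg hak]
            have haux : a k ^ d = a k ^ (d - 1) * a k := by rw [← pow_succ, hd1]
            rw [haux, show ((d : ℕ) : MvPolynomial (Fin 2) ℂ) = C (d : ℂ) from
              (map_natCast C d).symm]
            simp only [map_mul]
            ring
        cases s with
        | zero => exact j.elim0
        | succ t =>
          have hzero : C (mu j * d * a j ^ d) *
              (linForm (bb j) : MvPolynomial (Fin 2) ℂ) ^ (d - 1) = 0 := by
            rw [hj, zero_pow (by omega : d ≠ 0)]
            simp
          rw [Fin.sum_univ_succAbove _ j, hzero, zero_add] at hfxrep2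
          have : r ≤ t := Nat.sInf_le ⟨fun i => mu (j.succAbove i) * d * a (j.succAbove i) ^ d,
            fun i => bb (j.succAbove i), hfxrep2⟩
          omega
      · -- all a k ≠ 0 : fRank f ≤ s ≤ r < fRank f, contradiction
        push_neg at ha
        have hfrep2 : f = ∑ k, C (mu k * a k ^ d) * (linForm (b k / a k)) ^ d := by
          rw [hrep]
          refine Finset.sum_congr rfl (fun k _ => ?_)
          rw [hab k]
          have hLk : C (a k) * X 0 + C (b k) * X 1 = C (a k) * linForm (b k / a k) := by
            unfold linForm
            rw [mul_add, ← mul_assoc, ← map_mul, mul_div_cancel₀ _ (ha k)]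
          rw [hLk, mul_pow, ← map_pow, ← mul_assoc, ← map_mul]
        have : fRank d f ≤ s := Nat.sInf_le ⟨fun k => mu k * a k ^ d,
          fun k => b k / a k, hfrep2⟩
        omega
  omega
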